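/- Let T be a dissection tree of a graph G, and let C be a simple cycle of G of minimum weight. Let S be a lowest vertex of T such that V(C) ⊆ below(S). If S is a nonleaf vertex of T, then |S ∩ V(C)| ≥ 2. -/

import Mathlib

open SimpleGraph

universe u

variable {V : Type u}

/-- The weight of a walk: the sum of the weights of its edges. -/
def walkWeight {G : SimpleGraph V} (w : Sym2 V → ℕ) {u v : V} (p : G.Walk u v) : ℕ :=
  (p.edges.map w).sum

/-- A rooted binary tree whose vertices are labeled by subsets of `V`. -/
inductive DTree (V : Type u) : Type u
  | leaf : Set V → DTree V
  | node : Set V → DTree V → DTree V → DTree V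

namespace DTree

/-- `below(S)`: the union of the vertex sets in the subtree rooted at `S`. -/
def belowSet : DTree V → Set V
  | leaf S => S
  | node S l r => S ∪ (l.belowSet ∪ r.belowSet)

end DTree

/-- Node sets `V₁` and `V₂` are dissected by `S` in `G` if no node of `V₁ \ S`
is adjacent to a node of `V₂ \ S`. -/
def Dissects (G : SimpleGraph V) (S V₁ V₂ : Set V) : Prop :=
  ∀ a ∈ V₁ \ S, ∀ b ∈ V₂ \ S, ¬ G.Adj a b

namespace DTree

/-- Property 2 of a dissection tree: each nonleaf vertex `S` with children `S'`, `S''`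
satisfies (a) `S ⊆ below(S') ∩ below(S'')` and (b) `below(S')` and `below(S'')` are
dissected by `S` in `G`. -/
def IsDissection (G : SimpleGraph V) : DTree V → Prop
  | leaf _ => True
  | node S l r =>
      S ⊆ l.belowSet ∩ r.belowSet ∧ Dissects G S l.belowSet r.belowSet ∧
        l.IsDissection G ∧ r.IsDissection G

/-- A dissection tree of `G`: Property 1 (`below(root) = V(G)`) and Property 2. -/
def IsDissectionTree (G : SimpleGraph V) (t : DTree V) : Prop :=
  t.belowSet = Set.univ ∧ t.IsDissection G

/-- `IsSubtree s t` means `s` occurs as a subtree of `t`, i.e. `s` is a vertex of the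
tree `t` (together with everything below it). -/
inductive IsSubtree : DTree V → DTree V → Prop
  | refl (t : DTree V) : IsSubtree t t
  | left {s l r : DTree V} {S : Set V} : IsSubtree s l → IsSubtree s (node S l r)
  | right {s l r : DTree V} {S : Set V} : IsSubtree s r → IsSubtree s (node S l r)

end DTree

/-- A subtree of a tree satisfying Property 2 also satisfies Property 2. -/
lemma isDissection_of_isSubtree {G : SimpleGraph V} {s t : DTree V}
    (hsub : DTree.IsSubtree s t) (ht : t.IsDissection G) : s.IsDissection G := by
  induction hsub with
  | refl => exact ht
  | left _ ih => exact ih ht.2.2.1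
  | right _ ih => exact ih ht.2.2.2

/-- Along a walk avoiding `S` and staying in `L ∪ R`, membership in `L` is invariant. -/
lemma mem_left_iff_of_walk {G : SimpleGraph V} {S L R : Set V}
    (hd : Dissects G S L R) :
    ∀ {u v : V} (q : G.Walk u v),
      (∀ x ∈ q.support, (x ∈ L ∨ x ∈ R) ∧ x ∉ S) → (u ∈ L ↔ v ∈ L) := by
  intro u v q
  induction q with
  | nil => intro _; rfl
  | @cons u u' v hadj q ih =>
    intro hcond
    have hu := hcond u (by simp)
    have hu' := hcond u' (by simp)
    have step : u ∈ L ↔ u' ∈ L := by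
      constructor
      · intro huL
        by_contra hu'L
        have hu'R : u' ∈ R := hu'.1.resolve_left hu'L
        exact hd u ⟨huL, hu.2⟩ u' ⟨hu'R, hu'.2⟩ hadj
      · intro hu'L
        by_contra huL
        have huR : u ∈ R := hu.1.resolve_left huL
        exact hd u' ⟨hu'L, hu'.2⟩ u ⟨huR, hu.2⟩ hadj.symm
    exact step.trans (ih fun x hx => hcond x (by simp [hx]))

/-- The end of a nontrivial closed walk lies in the tail of its support. -/
lemma end_mem_tail_of_closed {G : SimpleGraph V} {v : V} (c : G.Walk v v)
    (hc : ¬ c.Nil) : v ∈ c.support.tail := by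
  cases c with
  | nil => simp at hc
  | cons h q => simpa using q.end_mem_support

/-- Membership in the support of a rotated closed walk. -/
lemma mem_support_rotate [DecidableEq V] {G : SimpleGraph V} {v u y : V} (c : G.Walk v v)
    (hc : ¬ c.Nil) (h : u ∈ c.support) :
    y ∈ (c.rotate u h).support ↔ y ∈ c.support := by
  have hperm := (SimpleGraph.Walk.support_rotate c u h).perm
  constructor
  · intro hy
    rw [SimpleGraph.Walk.support_eq_cons, List.mem_cons] at hy
    rcases hy with hy | hy
    · exact hy ▸ h
    · exact List.mem_of_mem_tail (hperm.mem_iff.mp hy)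
  · intro hy
    rw [SimpleGraph.Walk.support_eq_cons, List.mem_cons] at hy
    rcases hy with hy | hy
    · subst hy
      exact List.mem_of_mem_tail (hperm.mem_iff.mpr (end_mem_tail_of_closed c hc))
    · exact List.mem_of_mem_tail (hperm.mem_iff.mpr hy)

/-- For a path `p : Walk u v`, the endpoint `v` does not occur in `p.takeUntil c`
when `c ≠ v`. -/
lemma end_not_mem_takeUntil [DecidableEq V] {G : SimpleGraph V} {u v c : V} {p : G.Walk u v}
    (hp : p.IsPath) (hc : c ∈ p.support) (hne : c ≠ v) :
    v ∉ (p.takeUntil c hc).support := by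
  intro hv
  have hnd := hp.support_nodup
  rw [← p.take_spec hc, SimpleGraph.Walk.support_append] at hnd
  have hv' : v ∈ (p.dropUntil c hc).support.tail :=
    SimpleGraph.Walk.end_mem_tail_support_of_ne hne _
  exact (List.disjoint_of_nodup_append hnd) hv hv'

open DTree in
/-- Let `T` be a dissection tree of `G` and let `C` be a
minimum-weight simple cycle of `G`.  Let `S` be a lowest vertex of `T` such that
`V(C) ⊆ below(S)` (no child of `S` contains `V(C)` below it).  If `S` is a nonleaf
vertex of `T`, then `|S ∩ V(C)| ≥ 2`. -/
theorem two_le_card_inter_of_lowest {V : Type*} (G : SimpleGraph V) (w : Sym2 V → ℕ)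
    (t : DTree V) (ht : IsDissectionTree G t)
    (x : V) (p : G.Walk x x) (hp : p.IsCycle)
    (hmin : ∀ (y : V) (q : G.Walk y y), q.IsCycle → walkWeight w p ≤ walkWeight w q)
    (S : Set V) (l r : DTree V)
    (hsub : IsSubtree (DTree.node S l r) t)
    (hC : {a | a ∈ p.support} ⊆ (DTree.node S l r).belowSet)
    (hl : ¬ {a | a ∈ p.support} ⊆ l.belowSet)
    (hr : ¬ {a | a ∈ p.support} ⊆ r.belowSet) :
    2 ≤ (S ∩ {a | a ∈ p.support}).ncard := by
  classical
  set L := l.belowSet with hLdef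
  set R := r.belowSet with hRdef
  set P : Set V := {a | a ∈ p.support} with hPdef
  obtain ⟨hS, hdis, -, -⟩ :
      S ⊆ L ∩ R ∧ Dissects G S L R ∧ l.IsDissection G ∧ r.IsDissection G :=
    isDissection_of_isSubtree hsub ht.2
  -- pick the witnesses a ∉ L and b ∉ R on the cycle
  rw [Set.not_subset] at hl hr
  obtain ⟨a, haP, haL⟩ := hl
  obtain ⟨b, hbP, hbR⟩ := hr
  have haS : a ∉ S := fun h => haL (hS h).1
  have hbS : b ∉ S := fun h => hbR (hS h).2
  have haR : a ∈ R := by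
    have := hC haP
    rcases this with h | h | h
    · exact absurd h haS
    · exact absurd h haL
    · exact h
  have hbL : b ∈ L := by
    have := hC hbP
    rcases this with h | h | h
    · exact absurd h hbS
    · exact h
    · exact absurd h hbR
  -- the key propagation principle
  have key : ∀ {u v : V} (q : G.Walk u v), (∀ y ∈ q.support, y ∈ p.support) →
      (∀ y ∈ q.support, y ∉ S) → (u ∈ L ↔ v ∈ L) := by
    intro u v q h1 h2
    refine mem_left_iff_of_walk hdis q fun y hy => ⟨?_, h2 y hy⟩
    rcases hC (h1 y hy) with h | h | h
    · exact absurd h (h2 y hy)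
    · exact Or.inl h
    · exact Or.inr h
  by_contra hlt
  push_neg at hlt
  have hfin : (S ∩ P).Finite := Set.Finite.subset p.support.finite_toSet
    (Set.inter_subset_right)
  have hle : (S ∩ P).ncard ≤ 1 := by omega
  rcases (Set.ncard_le_one_iff_eq hfin).mp hle with hemp | ⟨s, hsing⟩
  · -- no vertex of the cycle is in S: walk from b to a avoids S
    have hnS : ∀ y ∈ p.support, y ∉ S := by
      intro y hy hyS
      have : y ∈ S ∩ P := ⟨hyS, hy⟩
      simp [hemp] at this
    set q : G.Walk b a := (p.dropUntil b hbP).append (p.takeUntil a haP) with hqdef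
    have hqsub : ∀ y ∈ q.support, y ∈ p.support := by
      intro y hy
      rw [hqdef, SimpleGraph.Walk.mem_support_append_iff] at hy
      rcases hy with hy | hy
      · exact SimpleGraph.Walk.support_dropUntil_subset p hbP hy
      · exact SimpleGraph.Walk.support_takeUntil_subset p haP hy
    have := key q hqsub (fun y hy => hnS y (hqsub y hy))
    exact haL (this.mp hbL)
  · -- exactly one vertex s of the cycle is in S
    have hsmem : s ∈ S ∩ P := by rw [hsing]; rfl
    have hsP : s ∈ p.support := hsmem.2
    have huniq : ∀ y, y ∈ S → y ∈ p.support → y = s := by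
      intro y hyS hyP
      have : y ∈ S ∩ P := ⟨hyS, hyP⟩
      rwa [hsing, Set.mem_singleton_iff] at this
    have hane : a ≠ s := fun h => haS (h ▸ hsmem.1)
    have hbne : b ≠ s := fun h => hbS (h ▸ hsmem.1)
    have hnotnil : ¬ p.Nil := hp.not_nil
    have hq'c : (p.rotate s hsP).IsCycle := hp.rotate hsP
    have hq'mem : ∀ y, y ∈ (p.rotate s hsP).support ↔ y ∈ p.support :=
      fun y => mem_support_rotate p hnotnil hsP
    -- destructure the rotated cycle
    cases hrot : p.rotate s hsP with
    | nil =>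
      rw [hrot] at hq'c
      exact hq'c.ne_nil rfl
    | @cons _ u _ hadj tail =>
      rw [hrot] at hq'c hq'mem
      have htailpath : tail.IsPath := ((SimpleGraph.Walk.cons_isCycle_iff tail hadj).mp hq'c).1
      have htailsub : ∀ y ∈ tail.support, y ∈ p.support := by
        intro y hy
        exact (hq'mem y).mp (by simp [hy])
      have hatail : a ∈ tail.support := by
        have := (hq'mem a).mpr (haP)
        simp only [SimpleGraph.Walk.support_cons, List.mem_cons] at this
        exact this.resolve_left hane
      have hbtail : b ∈ tail.support := by
        have := (hq'mem b).mpr (hbP)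
        simp only [SimpleGraph.Walk.support_cons, List.mem_cons] at this
        exact this.resolve_left hbne
      have hsnot : s ∉ (tail.takeUntil a hatail).support :=
        end_not_mem_takeUntil htailpath hatail hane
      by_cases hbtake : b ∈ (tail.takeUntil a hatail).support
      · -- walk from b to a inside takeUntil, avoiding s
        set q : G.Walk b a := (tail.takeUntil a hatail).dropUntil b hbtake with hqdef
        have hqsub0 : ∀ y ∈ q.support, y ∈ (tail.takeUntil a hatail).support :=
          fun y hy => SimpleGraph.Walk.support_dropUntil_subset _ hbtake hy
        have hqsub : ∀ y ∈ q.support, y ∈ p.support := fun y hy =>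
          htailsub y (SimpleGraph.Walk.support_takeUntil_subset tail hatail (hqsub0 y hy))
        have hqS : ∀ y ∈ q.support, y ∉ S := by
          intro y hy hyS
          exact hsnot (huniq y hyS (hqsub y hy) ▸ hqsub0 y hy)
        exact haL ((key q hqsub hqS).mp hbL)
      · -- b lies in dropUntil; walk from a to b there, avoiding s
        have hbdrop : b ∈ (tail.dropUntil a hatail).support := by
          have hspec := tail.take_spec hatail
          have : b ∈ tail.support := hbtail
          rw [← hspec, SimpleGraph.Walk.mem_support_append_iff] at this
          exact this.resolve_left hbtake
        have hdroppath : (tail.dropUntil a hatail).IsPath := htailpath.dropUntil hatail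
        have hsnot2 : s ∉ ((tail.dropUntil a hatail).takeUntil b hbdrop).support :=
          end_not_mem_takeUntil hdroppath hbdrop hbne
        set q : G.Walk a b := (tail.dropUntil a hatail).takeUntil b hbdrop with hqdef
        have hqsub0 : ∀ y ∈ q.support, y ∈ (tail.dropUntil a hatail).support :=
          fun y hy => SimpleGraph.Walk.support_takeUntil_subset _ hbdrop hy
        have hqsub : ∀ y ∈ q.support, y ∈ p.support := fun y hy =>
          htailsub y (SimpleGraph.Walk.support_dropUntil_subset tail hatail (hqsub0 y hy))
        have hqS : ∀ y ∈ q.support, y ∉ S := by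
          intro y hy hyS
          exact hsnot2 (huniq y hyS (hqsub y hy) ▸ hy)
        exact haL ((key q hqsub hqS).mpr hbL)
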